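/- arXiv:1112.2632 — 3 statements merged into one kernel-verified Lean document; each statement's English description precedes it below -/
import Mathlib

section
/- Let H = (X, Y) be a hypergraph with vertex set X and hyperedge set Y whose associated bipartite graph is connected, fix two distinct hyperedges y₁, y₂ ∈ Y, and let H' = (X ∪ {x*}, Y) be obtained from H by adjoining one new vertex x* incident to exactly y₁ and y₂. Then for each i ∈ {1, 2}, if f : Y → ℕ is a hypertree in H, the function f + 1_{y_i} is a hypertree in H'. -/
open SimpleGraph

/-- The bipartite graph associated to a hypergraph with hyperedge set `Y`,
vertex set `X`, and incidence function `I`. -/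
def bip {X Y : Type*} (I : Y → Finset X) : SimpleGraph (Y ⊕ X) :=
  SimpleGraph.fromRel fun a b =>
    ∃ y x, a = Sum.inl y ∧ b = Sum.inr x ∧ x ∈ I y

/-- `f : Y → ℕ` is a hypertree: there is a spanning tree of `bip I` whose
degree at each `y ∈ Y` is `f y + 1`. -/
def IsHypertree {X Y : Type*} (I : Y → Finset X) (f : Y → ℕ) : Prop :=
  ∃ T : SimpleGraph (Y ⊕ X), T ≤ bip I ∧ T.IsTree ∧
    ∀ y : Y, (T.neighborSet (Sum.inl y)).ncard = f y + 1

/-- The incidence function of the hypergraph `H' = (X ∪ {x*}, Y)` obtained by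
adjoining one new vertex `x* = none` incident to exactly `y₁` and `y₂`. -/
def extInc {X Y : Type*} [DecidableEq X] [DecidableEq Y] (I : Y → Finset X)
    (y₁ y₂ : Y) : Y → Finset (Option X) :=
  fun y => (I y).map Function.Embedding.some ∪
    (if y = y₁ ∨ y = y₂ then {none} else ∅)


section AddLeaf

variable {V W : Type*}

/-- Add a pendant leaf `w₀` attached at `f v₀` to the image of `G` under `f`. -/
def addLeaf (G : SimpleGraph V) (f : V ↪ W) (v₀ : V) (w₀ : W) : SimpleGraph W :=
  SimpleGraph.fromRel fun a b =>
    (∃ u v, a = f u ∧ b = f v ∧ G.Adj u v) ∨ (a = f v₀ ∧ b = w₀)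

variable {G : SimpleGraph V} {f : V ↪ W} {v₀ : V} {w₀ : W}

lemma addLeaf_adj_map (hw : w₀ ∉ Set.range f) {a b : V} :
    (addLeaf G f v₀ w₀).Adj (f a) (f b) ↔ G.Adj a b := by
  constructor
  · rintro ⟨hne, (⟨u, v, hu, hv, h⟩ | ⟨h1, h2⟩) | (⟨u, v, hu, hv, h⟩ | ⟨h1, h2⟩)⟩
    · obtain rfl := f.injective hu; obtain rfl := f.injective hv; exact h
    · exact absurd ⟨b, h2⟩ hw
    · obtain rfl := f.injective hu; obtain rfl := f.injective hv; exact h.symm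
    · exact absurd ⟨a, h2⟩ hw
  · intro h
    exact ⟨fun he => h.ne (f.injective he), Or.inl (Or.inl ⟨a, b, rfl, rfl, h⟩)⟩

lemma addLeaf_adj_w₀ (hw : w₀ ∉ Set.range f) {b : W} :
    (addLeaf G f v₀ w₀).Adj w₀ b ↔ b = f v₀ := by
  constructor
  · rintro ⟨hne, (⟨u, v, hu, hv, h⟩ | ⟨h1, h2⟩) | (⟨u, v, hu, hv, h⟩ | ⟨h1, h2⟩)⟩
    · exact absurd ⟨u, hu.symm⟩ hw
    · exact absurd ⟨v₀, h1.symm⟩ hw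
    · exact absurd ⟨v, hv.symm⟩ hw
    · exact h1
  · rintro rfl
    exact ⟨fun he => hw ⟨v₀, he.symm⟩, Or.inr (Or.inr ⟨rfl, rfl⟩)⟩

/-- The natural graph hom `G →g addLeaf G f v₀ w₀`. -/
def addLeafHom (G : SimpleGraph V) (f : V ↪ W) (v₀ : V) (w₀ : W) :
    G →g addLeaf G f v₀ w₀ where
  toFun := f
  map_rel' := fun h => ⟨fun he => (SimpleGraph.Adj.ne h) (f.injective he),
    Or.inl (Or.inl ⟨_, _, rfl, rfl, h⟩)⟩

lemma addLeafHom_injective : Function.Injective (addLeafHom G f v₀ w₀) :=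
  f.injective

open Classical in
lemma addLeaf_neighborSet (hw : w₀ ∉ Set.range f) (u : V) :
    (addLeaf G f v₀ w₀).neighborSet (f u) =
      f '' G.neighborSet u ∪ (if u = v₀ then {w₀} else ∅) := by
  classical
  ext b
  simp only [mem_neighborSet, Set.mem_union, Set.mem_image]
  constructor
  · rintro ⟨hne, (⟨p, q, hp, hq, h⟩ | ⟨h1, h2⟩) | (⟨p, q, hp, hq, h⟩ | ⟨h1, h2⟩)⟩
    · obtain rfl := f.injective hp; exact Or.inl ⟨q, h, hq.symm⟩
    · obtain rfl := f.injective h1; simp [h2]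
    · obtain rfl := f.injective hq; exact Or.inl ⟨p, h.symm, hp.symm⟩
    · exact absurd ⟨u, h2⟩ hw
  · rintro (⟨x, hx, rfl⟩ | hb)
    · exact ⟨fun he => (G.ne_of_adj hx) (f.injective he), Or.inl (Or.inl ⟨u, x, rfl, rfl, hx⟩)⟩
    · split_ifs at hb with h
      · subst h; obtain rfl : b = w₀ := hb
        exact ⟨fun he => hw ⟨u, he⟩, Or.inl (Or.inr ⟨rfl, rfl⟩)⟩
      · exact absurd hb (Set.notMem_empty b)

/-- Pull back a walk through an injective hom whose support lies in the range. -/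
lemma walk_pullback {G : SimpleGraph V} {G' : SimpleGraph W} (g : G →g G')
    (hinj : Function.Injective g) (hrev : ∀ u v : V, G'.Adj (g u) (g v) → G.Adj u v)
    {a b : W} (p : G'.Walk a b) :
    ∀ (_ : ∀ x ∈ p.support, x ∈ Set.range g)
      (u v : V) (ha : g u = a) (hb : g v = b),
      ∃ q : G.Walk u v, q.map g = p.copy ha.symm hb.symm := by
  induction p with
  | nil =>
    intro _ u v ha hb
    subst ha; obtain rfl := hinj hb
    exact ⟨.nil, rfl⟩
  | @cons a c b hadj p ih =>
    intro hsup u v ha hb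
    subst ha; subst hb
    obtain ⟨m, hm⟩ := hsup c (by simp)
    subst hm
    obtain ⟨q, hq⟩ := ih (fun x hx => hsup x (by simp [hx])) m v rfl rfl
    exact ⟨.cons (hrev _ _ hadj) q, by simp only [Walk.map_cons, hq]; rfl⟩

lemma addLeaf_isTree (hw : w₀ ∉ Set.range f)
    (hsurj : ∀ w : W, w = w₀ ∨ w ∈ Set.range f) (hG : G.IsTree) :
    (addLeaf G f v₀ w₀).IsTree := by
  classical
  constructor
  · -- connected
    haveI hne : Nonempty W := ⟨w₀⟩
    refine Connected.mk fun a b => ?_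
    have key : ∀ w : W, (addLeaf G f v₀ w₀).Reachable (f v₀) w := by
      intro w
      rcases hsurj w with rfl | ⟨u, rfl⟩
      · exact Adj.reachable (((addLeaf_adj_w₀ hw).mpr rfl).symm)
      · exact Reachable.map (addLeafHom G f v₀ w₀) (hG.isConnected v₀ u)
    exact (key a).symm.trans (key b)
  · -- acyclic
    intro a c hc
    by_cases hw₀ : w₀ ∈ c.support
    · -- cycle through the leaf: impossible
      have hc' := hc.rotate hw₀
      set c' := c.rotate w₀ hw₀ with hc'def
      have h3 := hc'.three_le_length
      have hnil : ¬ c'.Nil := Walk.not_nil_iff_lt_length.mpr (by omega)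
      obtain ⟨x, hadj, q, hq⟩ := Walk.not_nil_iff.mp hnil
      obtain rfl : x = f v₀ := (addLeaf_adj_w₀ hw).mp hadj
      have hxw : (f v₀ : W) ≠ w₀ := fun he => hw ⟨v₀, he⟩
      have hqnil : ¬ q.reverse.Nil := Walk.not_nil_of_ne (Ne.symm hxw)
      obtain ⟨y, hadj', q₂, hq₂⟩ := Walk.not_nil_iff.mp hqnil
      obtain rfl : y = f v₀ := (addLeaf_adj_w₀ hw).mp hadj'
      have hmem : s(w₀, f v₀) ∈ q.edges := by
        have : s(w₀, f v₀) ∈ q.reverse.edges := by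
          rw [hq₂]; simp
        rwa [Walk.edges_reverse, List.mem_reverse] at this
      have hnodup : c'.edges.Nodup := hc'.isTrail.edges_nodup
      rw [hq] at hnodup
      simp only [Walk.edges_cons, List.nodup_cons] at hnodup
      exact hnodup.1 hmem
    · -- cycle avoiding the leaf pulls back to G
      have ha : a ∈ c.support := Walk.start_mem_support c
      have hsup : ∀ x ∈ c.support, x ∈ Set.range (addLeafHom G f v₀ w₀) := by
        intro x hx
        rcases hsurj x with rfl | h
        · exact absurd hx hw₀
        · exact h
      obtain ⟨u, hu⟩ := hsup a ha
      obtain ⟨q, hq⟩ := walk_pullback (addLeafHom G f v₀ w₀) addLeafHom_injective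
        (fun u v h => (addLeaf_adj_map hw).mp h) c hsup u u hu hu
      have : (q.map (addLeafHom G f v₀ w₀)).IsCycle := by
        rw [hq]
        exact (Walk.isCycle_copy c hu.symm).mpr hc
      exact hG.IsAcyclic _ ((Walk.map_isCycle_iff_of_injective addLeafHom_injective).mp this)

end AddLeaf

section Main

variable {X Y : Type*}

lemma extInc_hypertree_aux [Fintype X] [Fintype Y] [DecidableEq X] [DecidableEq Y]
    (I : Y → Finset X) (y₁ y₂ i : Y) (hi : i = y₁ ∨ i = y₂)
    (f : Y → ℕ) (hf : IsHypertree I f) :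
    IsHypertree (extInc I y₁ y₂) (fun y => f y + if y = i then 1 else 0) := by
  obtain ⟨T, hle, htree, hdeg⟩ := hf
  set femb : (Y ⊕ X) ↪ (Y ⊕ Option X) :=
    Function.Embedding.sumMap (Function.Embedding.refl Y) Function.Embedding.some with hfemb
  have hw : (Sum.inr none : Y ⊕ Option X) ∉ Set.range femb := by
    rintro ⟨(y | x), h⟩ <;> simp [hfemb] at h
  have hsurj : ∀ w : Y ⊕ Option X, w = Sum.inr none ∨ w ∈ Set.range femb := by
    rintro (y | (_ | x))
    · exact Or.inr ⟨Sum.inl y, rfl⟩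
    · exact Or.inl rfl
    · exact Or.inr ⟨Sum.inr x, rfl⟩
  have hle' : ∀ u v, T.Adj u v →
      (bip (extInc I y₁ y₂)).Adj (femb u) (femb v) := by
    intro u v huv
    obtain ⟨hne, (⟨y, x, rfl, rfl, hx⟩ | ⟨y, x, rfl, rfl, hx⟩)⟩ := hle huv
    · exact ⟨by simp [hfemb], Or.inl ⟨y, some x, rfl, rfl,
        Finset.mem_union_left _ (Finset.mem_map_of_mem _ hx)⟩⟩
    · exact ⟨by simp [hfemb], Or.inr ⟨y, some x, rfl, rfl,
        Finset.mem_union_left _ (Finset.mem_map_of_mem _ hx)⟩⟩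
  have hnew : (bip (extInc I y₁ y₂)).Adj (femb (Sum.inl i)) (Sum.inr none) := by
    refine ⟨by simp [hfemb], Or.inl ⟨i, none, rfl, rfl, ?_⟩⟩
    simp [extInc, hi]
  refine ⟨addLeaf T femb (Sum.inl i) (Sum.inr none), ?_, addLeaf_isTree hw hsurj htree, ?_⟩
  · rintro a b ⟨hne, (⟨u, v, rfl, rfl, h⟩ | ⟨rfl, rfl⟩) | (⟨u, v, rfl, rfl, h⟩ | ⟨rfl, rfl⟩)⟩
    · exact hle' u v h
    · exact hnew
    · exact (hle' u v h).symm
    · exact hnew.symm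
  · intro y
    have hy' : (Sum.inl y : Y ⊕ Option X) = femb (Sum.inl y) := rfl
    rw [hy', addLeaf_neighborSet hw]
    by_cases hyi : y = i
    · rw [if_pos (by rw [hyi]), Set.union_singleton,
        Set.ncard_insert_of_notMem (by rintro ⟨x, -, hx⟩; exact hw ⟨x, hx⟩),
        Set.ncard_image_of_injective _ femb.injective, hdeg y]
      simp [hyi]
    · rw [if_neg (by simpa using hyi), Set.union_empty,
        Set.ncard_image_of_injective _ femb.injective, hdeg y]
      simp [hyi]

end Main

/-- If `f` is a hypertree of `H`, then both `f + 1_{y₁}` and `f + 1_{y₂}` are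
hypertrees of `H'`. -/
theorem extInc_hypertree {X Y : Type*} [Fintype X] [Fintype Y]
    [DecidableEq X] [DecidableEq Y] (I : Y → Finset X)
    (hne : ∀ y, (I y).Nonempty) (hconn : (bip I).Connected)
    (y₁ y₂ : Y) (hy : y₁ ≠ y₂) (f : Y → ℕ) (hf : IsHypertree I f) :
    IsHypertree (extInc I y₁ y₂) (fun y => f y + if y = y₁ then 1 else 0) ∧
    IsHypertree (extInc I y₁ y₂) (fun y => f y + if y = y₂ then 1 else 0) :=
  ⟨extInc_hypertree_aux I y₁ y₂ y₁ (Or.inl rfl) f hf,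
   extInc_hypertree_aux I y₁ y₂ y₂ (Or.inr rfl) f hf⟩
end

section
/- Let H = (X, Y) be a hypergraph with vertex set X and hyperedge set Y whose associated bipartite graph is connected, fix two distinct hyperedges y₁, y₂ ∈ Y, suppose some vertex x ∈ X is incident to both y₁ and y₂, and let H' = (X ∪ {x*}, Y) be obtained from H by adjoining one new vertex x* incident to exactly y₁ and y₂. Then every hypertree g : Y → ℕ of H' admits a realizing spanning tree of bip H' (i.e., a spanning tree whose degree at each y ∈ Y equals g(y) + 1) in which the vertex x* has degree 1. -/
open SimpleGraph

set_option linter.unusedSectionVars false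

section Aux

variable {V : Type*} [DecidableEq V]

lemma sym2_ne_of {a b c d : V} (h : ¬((a = c ∧ b = d) ∨ (a = d ∧ b = c))) :
    s(a, b) ≠ s(c, d) := fun he => h (Sym2.eq_iff.mp he)

lemma isolated_not_mem_support {G : SimpleGraph V} {n : V}
    (hiso : ∀ w, ¬ G.Adj n w) :
    ∀ {u v : V} (p : G.Walk u v), u ≠ n → n ∉ p.support := by
  intro u v p
  induction p with
  | nil => intro hu; simp [Ne.symm hu]
  | @cons u w v h q ih =>
    intro hu hmem
    rw [SimpleGraph.Walk.support_cons, List.mem_cons] at hmem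
    rcases hmem with h1 | h2
    · exact hu h1.symm
    · exact ih (fun hw => hiso u (by rw [hw] at h; exact h.symm)) h2

lemma collapse_reachable {G : SimpleGraph V} {n c : V}
    (hn : ∀ w, G.Adj n w → w = c) :
    ∀ {p q : V}, G.Walk p q →
      (G.deleteEdges {s(n, c)}).Reachable (if p = n then c else p) (if q = n then c else q) := by
  intro p q w
  induction w with
  | nil => exact SimpleGraph.Reachable.refl _
  | @cons u u' v h q ih =>
    refine SimpleGraph.Reachable.trans ?_ ih
    by_cases hu : u = n
    · have hu' : u' = c := by
        apply hn
        rw [← hu]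
        exact h
      have hc : c ≠ n := by
        intro e
        apply G.irrefl (v := n)
        rw [hu, hu', e] at h
        exact h
      rw [if_pos hu, if_neg (by rw [hu']; exact hc), hu']
    · by_cases hw : u' = n
      · have hu2 : u = c := by
          apply hn
          rw [hw] at h
          exact h.symm
        rw [if_neg hu, if_pos hw, hu2]
      · have hne : s(u, u') ≠ s(n, c) := by
          apply sym2_ne_of
          rintro (⟨h1, -⟩ | ⟨-, h2⟩)
          · exact hu h1
          · exact hw h2
        have hadj : (G.deleteEdges {s(n, c)}).Adj u u' := by
          rw [SimpleGraph.deleteEdges_adj]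
          exact ⟨h, by simpa using hne⟩
        rw [if_neg hu, if_neg hw]
        exact hadj.reachable

lemma delete_reach_dichotomy {G : SimpleGraph V} {n b : V} :
    ∀ {v z : V}, G.Walk v z →
    ((G.deleteEdges {s(n, b)}).Reachable z n ∨ (G.deleteEdges {s(n, b)}).Reachable z b) →
    ((G.deleteEdges {s(n, b)}).Reachable v n ∨ (G.deleteEdges {s(n, b)}).Reachable v b) := by
  intro v z w
  induction w with
  | nil => exact id
  | @cons u u' z h q ih =>
    intro base
    have IH := ih base
    by_cases he : s(u, u') = s(n, b)
    · rw [Sym2.eq_iff] at he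
      rcases he with ⟨h1, -⟩ | ⟨h1, -⟩
      · exact Or.inl (by rw [h1])
      · exact Or.inr (by rw [h1])
    · have hadj : (G.deleteEdges {s(n, b)}).Adj u u' := by
        rw [SimpleGraph.deleteEdges_adj]
        exact ⟨h, by simpa using he⟩
      rcases IH with hl | hr
      · exact Or.inl (hadj.reachable.trans hl)
      · exact Or.inr (hadj.reachable.trans hr)

lemma cross_not_reachable (T : SimpleGraph V) (hT : T.IsTree)
    (n A B u : V) (hAB : A ≠ B) (hAn : A ≠ n) (hBn : B ≠ n) (hun : u ≠ n)
    (hnbhd : T.neighborSet n = {A, B})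
    (h2 : (T.deleteEdges {s(n, B)}).Reachable u B) :
    ¬ (T.deleteEdges {s(n, A)}).Reachable u A := by
  intro h1
  have hadjn : ∀ w, T.Adj n w ↔ (w = A ∨ w = B) := by
    intro w
    rw [← SimpleGraph.mem_neighborSet, hnbhd]
    simp
  set G0 : SimpleGraph V := T.deleteEdges {s(n, A), s(n, B)} with hG0
  have key1 : G0.Reachable u A := by
    have hcond : ∀ w, (T.deleteEdges {s(n, A)}).Adj n w → w = B := by
      intro w hw
      rw [SimpleGraph.deleteEdges_adj] at hw
      rcases (hadjn w).mp hw.1 with h | h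
      · exact absurd (by rw [h]; exact rfl) hw.2
      · exact h
    obtain ⟨w1⟩ := h1
    have := collapse_reachable hcond w1
    rw [if_neg hun, if_neg hAn] at this
    rwa [SimpleGraph.deleteEdges_deleteEdges, Set.singleton_union] at this
  have key2 : G0.Reachable u B := by
    have hcond : ∀ w, (T.deleteEdges {s(n, B)}).Adj n w → w = A := by
      intro w hw
      rw [SimpleGraph.deleteEdges_adj] at hw
      rcases (hadjn w).mp hw.1 with h | h
      · exact h
      · exact absurd (by rw [h]; exact rfl) hw.2
    obtain ⟨w2⟩ := h2
    have := collapse_reachable hcond w2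
    rw [if_neg hun, if_neg hBn] at this
    rw [SimpleGraph.deleteEdges_deleteEdges, Set.singleton_union] at this
    have hpair : ({s(n, B), s(n, A)} : Set (Sym2 V)) = {s(n, A), s(n, B)} := Set.pair_comm _ _
    rwa [hpair] at this
  have hABreach : G0.Reachable A B := key1.symm.trans key2
  have hiso : ∀ w, ¬ G0.Adj n w := by
    intro w hw
    rw [hG0, SimpleGraph.deleteEdges_adj] at hw
    rcases (hadjn w).mp hw.1 with h | h
    · exact hw.2 (by rw [h]; simp)
    · exact hw.2 (by rw [h]; simp)
  obtain ⟨w0⟩ := hABreach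
  have hp : w0.bypass.IsPath := SimpleGraph.Walk.bypass_isPath w0
  have hnotmem : n ∉ w0.bypass.support := isolated_not_mem_support hiso w0.bypass hAn
  have hedges : ∀ e ∈ w0.bypass.edges, e ∈ T.edgeSet := by
    intro e he
    have h' : e ∈ G0.edgeSet := w0.bypass.edges_subset_edgeSet he
    rw [hG0, SimpleGraph.edgeSet_deleteEdges] at h'
    exact h'.1
  set p1 : T.Walk A B := w0.bypass.transfer T hedges with hp1
  have hp1path : p1.IsPath := hp.transfer hedges
  have hp1supp : n ∉ p1.support := by
    rw [hp1, SimpleGraph.Walk.support_transfer]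
    exact hnotmem
  have hTA : T.Adj A n := ((hadjn A).mpr (Or.inl rfl)).symm
  have hTB : T.Adj n B := (hadjn B).mpr (Or.inr rfl)
  set p2 : T.Walk A B := SimpleGraph.Walk.cons hTA (SimpleGraph.Walk.cons hTB SimpleGraph.Walk.nil)
    with hp2
  have hp2path : p2.IsPath := by
    rw [hp2]
    simp [SimpleGraph.Walk.isPath_def, hAn, hAB, hBn.symm]
  have hp2supp : n ∈ p2.support := by
    rw [hp2]
    simp
  obtain ⟨P, -, hPuniq⟩ := hT.existsUnique_path A B
  have heq : p1 = p2 := (hPuniq p1 hp1path).trans (hPuniq p2 hp2path).symm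
  rw [heq] at hp1supp
  exact hp1supp hp2supp

end Aux

section BipAux

variable {X Y : Type*} [DecidableEq X] [DecidableEq Y]

lemma bip_adj_inl_inr (I : Y → Finset X) (y : Y) (v : X) :
    (bip I).Adj (Sum.inl y) (Sum.inr v) ↔ v ∈ I y := by
  simp [bip, SimpleGraph.fromRel_adj]

lemma mem_extInc_some (I : Y → Finset X) (y₁ y₂ y : Y) (x : X) :
    some x ∈ extInc I y₁ y₂ y ↔ x ∈ I y := by
  simp only [extInc, Finset.mem_union]
  constructor
  · rintro (h | h)
    · simpa using h
    · exfalso; split_ifs at h <;> simp at h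
  · intro h
    left
    simpa using h

lemma mem_extInc_none (I : Y → Finset X) (y₁ y₂ y : Y) :
    none ∈ extInc I y₁ y₂ y ↔ (y = y₁ ∨ y = y₂) := by
  simp only [extInc, Finset.mem_union]
  constructor
  · rintro (h | h)
    · simp at h
    · split_ifs at h with hc
      · exact hc
      · simp at h
  · intro h
    right
    rw [if_pos h]
    simp

lemma adj_none_cases {I : Y → Finset X} {y₁ y₂ : Y}
    {T : SimpleGraph (Y ⊕ Option X)} (hTle : T ≤ bip (extInc I y₁ y₂))
    {u : Y ⊕ Option X} (h : T.Adj (Sum.inr (none : Option X)) u) :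
    u = Sum.inl y₁ ∨ u = Sum.inl y₂ := by
  have h' := hTle h
  rw [bip, SimpleGraph.fromRel_adj] at h'
  obtain ⟨-, h' | h'⟩ := h'
  · obtain ⟨y, x, hy, -, -⟩ := h'
    exact absurd hy (by simp)
  · obtain ⟨y, x, hy, hx, hmem⟩ := h'
    have hx' : (none : Option X) = x := by simpa using hx
    rw [← hx'] at hmem
    rw [mem_extInc_none] at hmem
    rcases hmem with rfl | rfl
    · exact Or.inl hy
    · exact Or.inr hy

end BipAux

section Swap

variable {X Y : Type*} [Fintype X] [Fintype Y] [DecidableEq X] [DecidableEq Y]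

/-- The edge-swap construction: if the tree `T` realizes the degrees and `none` has
neighbor set `{inl a, inl b}`, and the common vertex `x` lies on the `n`-side of the
edge `n - inl b`, then we may replace the edge `n - inl b` by `inl b - some x`. -/
lemma swap_lemma (I' : Y → Finset (Option X)) (a b : Y) (hab : a ≠ b) (x : X)
    (hxb : (bip I').Adj (Sum.inl b) (Sum.inr (some x)))
    (T : SimpleGraph (Y ⊕ Option X)) (hTle : T ≤ bip I') (hTtree : T.IsTree)
    (hnbhd : T.neighborSet (Sum.inr (none : Option X)) = {Sum.inl a, Sum.inl b})
    (hreach : ¬ (T.deleteEdges {s(Sum.inr (none : Option X), Sum.inl b)}).Reachable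
        (Sum.inr (some x)) (Sum.inl b)) :
    ∃ T' : SimpleGraph (Y ⊕ Option X), T' ≤ bip I' ∧ T'.IsTree ∧
      (∀ y : Y, (T'.neighborSet (Sum.inl y)).ncard = (T.neighborSet (Sum.inl y)).ncard) ∧
      (T'.neighborSet (Sum.inr (none : Option X))).ncard = 1 := by
  classical
  set n : Y ⊕ Option X := Sum.inr none with hn
  set A : Y ⊕ Option X := Sum.inl a with hA
  set Bv : Y ⊕ Option X := Sum.inl b with hBv
  set sx : Y ⊕ Option X := Sum.inr (some x) with hsx
  have hABne : A ≠ Bv := by simp [hA, hBv, hab]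
  have hAn : A ≠ n := by simp [hA, hn]
  have hBn : Bv ≠ n := by simp [hBv, hn]
  have hsxn : sx ≠ n := by simp [hsx, hn]
  have hBsx : Bv ≠ sx := by simp [hBv, hsx]
  have hadjn : ∀ w, T.Adj n w ↔ (w = A ∨ w = Bv) := by
    intro w
    rw [← SimpleGraph.mem_neighborSet, hnbhd]
    simp
  have hnB_adj : T.Adj n Bv := (hadjn Bv).mpr (Or.inr rfl)
  have hnA_adj : T.Adj n A := (hadjn A).mpr (Or.inl rfl)
  set G2 : SimpleGraph (Y ⊕ Option X) := T.deleteEdges {s(n, Bv)} with hG2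
  set T' : SimpleGraph (Y ⊕ Option X) := G2 ⊔ SimpleGraph.fromEdgeSet {s(Bv, sx)} with hT'
  have hfne : s(Bv, sx) ≠ s(n, Bv) := by
    apply sym2_ne_of
    rintro (⟨h1, -⟩ | ⟨-, h2⟩)
    · exact hBn h1
    · exact hsxn h2
  have hTBs : ¬ T.Adj Bv sx := by
    intro h
    refine hreach ?_
    have hadj : G2.Adj sx Bv := by
      rw [hG2, SimpleGraph.deleteEdges_adj]
      refine ⟨h.symm, ?_⟩
      rw [Set.mem_singleton_iff]
      apply sym2_ne_of
      rintro (⟨h1, -⟩ | ⟨-, h2⟩)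
      · exact hsxn h1
      · exact hBn h2
    exact hadj.reachable
  have hT'adj : ∀ u v, T'.Adj u v ↔
      ((T.Adj u v ∧ s(u, v) ≠ s(n, Bv)) ∨ (s(u, v) = s(Bv, sx) ∧ u ≠ v)) := by
    intro u v
    rw [hT', SimpleGraph.sup_adj, hG2, SimpleGraph.deleteEdges_adj,
      SimpleGraph.fromEdgeSet_adj]
    simp
  have hT'le : T' ≤ bip I' := by
    rw [hT']
    refine sup_le (le_trans (SimpleGraph.deleteEdges_le _) hTle) ?_
    intro u v huv
    rw [SimpleGraph.fromEdgeSet_adj, Set.mem_singleton_iff, Sym2.eq_iff] at huv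
    rcases huv.1 with ⟨hu, hv⟩ | ⟨hu, hv⟩
    · rw [hu, hv]; exact hxb
    · rw [hu, hv]; exact hxb.symm
  have hdich : ∀ v, G2.Reachable v n ∨ G2.Reachable v Bv := by
    intro v
    obtain ⟨w⟩ := hTtree.isConnected.preconnected v n
    exact delete_reach_dichotomy w (Or.inl (SimpleGraph.Reachable.refl _))
  have hsxreach : G2.Reachable sx n := (hdich sx).resolve_right hreach
  have hT'Bs_adj : T'.Adj Bv sx := by
    rw [hT'adj]
    exact Or.inr ⟨rfl, hBsx⟩
  have hkey : ∀ v, T'.Reachable v sx := by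
    intro v
    rcases hdich v with h | h
    · exact (h.mono le_sup_left).trans ((hsxreach.mono le_sup_left).symm)
    · exact (h.mono le_sup_left).trans hT'Bs_adj.reachable
  have hconn' : T'.Connected := by
    constructor
    intro u v
    exact (hkey u).trans (hkey v).symm
  have hacyc : T'.IsAcyclic := by
    intro v c hc
    by_cases hf : s(Bv, sx) ∈ c.edges
    · have hbridge : T'.IsBridge s(Bv, sx) := by
        rw [SimpleGraph.isBridge_iff]
        refine fun hre => hreach ?_
        have hle2 : T' \ SimpleGraph.fromEdgeSet {s(Bv, sx)} ≤ G2 := by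
          intro u v huv
          rw [SimpleGraph.sdiff_adj] at huv
          obtain ⟨h1, h2⟩ := huv
          rw [hT'adj] at h1
          rcases h1 with ⟨hT1, hT2⟩ | ⟨hT1, hT2⟩
          · rw [hG2, SimpleGraph.deleteEdges_adj]
            exact ⟨hT1, by simpa using hT2⟩
          · exfalso
            apply h2
            rw [SimpleGraph.fromEdgeSet_adj]
            exact ⟨hT1, hT2⟩
        exact ((hre.mono hle2).symm)
      exact hbridge.notMem_edges_of_isCycle hc hf
    · have hedges : ∀ e ∈ c.edges, e ∈ T.edgeSet := by
        intro e he
        have h' : e ∈ T'.edgeSet := c.edges_subset_edgeSet he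
        rw [hT', SimpleGraph.edgeSet_sup, hG2, SimpleGraph.edgeSet_deleteEdges,
          SimpleGraph.edgeSet_fromEdgeSet] at h'
        rcases h' with ⟨h1, -⟩ | ⟨h1, -⟩
        · exact h1
        · rw [Set.mem_singleton_iff] at h1
          exact absurd (h1 ▸ he) hf
      exact hTtree.IsAcyclic (c.transfer T hedges) (hc.transfer hedges)
  have hdegB : T'.neighborSet Bv = insert sx (T.neighborSet Bv \ {n}) := by
    ext v
    simp only [SimpleGraph.mem_neighborSet, Set.mem_insert_iff, Set.mem_diff,
      Set.mem_singleton_iff, hT'adj]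
    constructor
    · rintro (⟨h1, h2⟩ | ⟨h1, -⟩)
      · refine Or.inr ⟨h1, fun hv => h2 ?_⟩
        rw [hv, Sym2.eq_iff]
        exact Or.inr ⟨rfl, rfl⟩
      · rw [Sym2.eq_iff] at h1
        rcases h1 with ⟨-, hv⟩ | ⟨h1, -⟩
        · exact Or.inl hv
        · exact absurd h1 hBsx
    · rintro (hv | ⟨h1, h2⟩)
      · exact Or.inr ⟨by rw [hv], by rw [hv]; exact hBsx⟩
      · refine Or.inl ⟨h1, ?_⟩
        apply sym2_ne_of
        rintro (⟨h3, -⟩ | ⟨-, h4⟩)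
        · exact hBn h3
        · exact h2 h4
  have hdegO : ∀ y : Y, Sum.inl y ≠ Bv →
      T'.neighborSet (Sum.inl y) = T.neighborSet (Sum.inl y) := by
    intro y hy
    ext v
    rw [SimpleGraph.mem_neighborSet, SimpleGraph.mem_neighborSet, hT'adj]
    constructor
    · rintro (⟨h1, -⟩ | ⟨h1, -⟩)
      · exact h1
      · rw [Sym2.eq_iff] at h1
        rcases h1 with ⟨h2, -⟩ | ⟨h2, -⟩
        · exact absurd h2 hy
        · exact absurd h2 (by simp [hsx])
    · intro h
      refine Or.inl ⟨h, ?_⟩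
      apply sym2_ne_of
      rintro (⟨h2, -⟩ | ⟨h2, -⟩)
      · exact (by simp [hn] : Sum.inl y ≠ n) h2
      · exact hy h2
  have hdegn : T'.neighborSet n = {A} := by
    ext v
    simp only [SimpleGraph.mem_neighborSet, Set.mem_singleton_iff, hT'adj]
    constructor
    · rintro (⟨h1, h2⟩ | ⟨h1, -⟩)
      · rcases (hadjn v).mp h1 with h | h
        · exact h
        · exfalso
          apply h2
          rw [h, Sym2.eq_iff]
          exact Or.inl ⟨rfl, rfl⟩
      · rw [Sym2.eq_iff] at h1
        rcases h1 with ⟨h2, -⟩ | ⟨h2, -⟩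
        · exact absurd h2.symm hBn
        · exact absurd h2.symm hsxn
    · intro hv
      refine Or.inl ⟨by rw [hv]; exact hnA_adj, ?_⟩
      rw [hv]
      apply sym2_ne_of
      rintro (⟨-, h2⟩ | ⟨h2, -⟩)
      · exact hABne h2
      · exact hBn h2.symm
  refine ⟨T', hT'le, ⟨hconn', hacyc⟩, ?_, ?_⟩
  · intro y
    by_cases hyb : Sum.inl y = Bv
    · rw [hyb, hdegB]
      have hmem : n ∈ T.neighborSet Bv := hnB_adj.symm
      have hnot : sx ∉ T.neighborSet Bv \ {n} := by
        rintro ⟨h1, -⟩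
        exact hTBs h1
      rw [Set.ncard_insert_of_notMem hnot (Set.toFinite _),
        Set.ncard_diff_singleton_of_mem hmem]
      have hpos : 0 < (T.neighborSet Bv).ncard := by
        rw [Set.ncard_pos (Set.toFinite _)]
        exact ⟨n, hmem⟩
      omega
    · rw [hdegO y hyb]
  · rw [hdegn]
    exact Set.ncard_singleton _

end Swap

/-- If some vertex `x ∈ X` is incident to both `y₁` and `y₂`, then every
hypertree `g` of `H'` admits a realizing spanning tree in which the new
vertex `x* = none` has degree `1`. -/
theorem extInc_realization_degree_one {X Y : Type*} [Fintype X] [Fintype Y]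
    [DecidableEq X] [DecidableEq Y] (I : Y → Finset X)
    (hne : ∀ y, (I y).Nonempty) (hconn : (bip I).Connected)
    (y₁ y₂ : Y) (hy : y₁ ≠ y₂) (hx : ∃ x, x ∈ I y₁ ∧ x ∈ I y₂)
    (g : Y → ℕ) (hg : IsHypertree (extInc I y₁ y₂) g) :
    ∃ T : SimpleGraph (Y ⊕ Option X), T ≤ bip (extInc I y₁ y₂) ∧ T.IsTree ∧
      (∀ y : Y, (T.neighborSet (Sum.inl y)).ncard = g y + 1) ∧
      (T.neighborSet (Sum.inr (none : Option X))).ncard = 1 := by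
  classical
  obtain ⟨x, hx1, hx2⟩ := hx
  obtain ⟨T, hTle, hTtree, hTdeg⟩ := hg
  have hsub : T.neighborSet (Sum.inr (none : Option X)) ⊆ {Sum.inl y₁, Sum.inl y₂} := by
    intro v hv
    have hv' : T.Adj (Sum.inr (none : Option X)) v := hv
    rcases adj_none_cases hTle hv' with h | h
    · exact Or.inl h
    · exact Or.inr h
  have hnonempty : (T.neighborSet (Sum.inr (none : Option X))).Nonempty := by
    obtain ⟨w⟩ := hTtree.isConnected.preconnected (Sum.inr (none : Option X)) (Sum.inl y₁)
    cases w with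
    | cons h q => exact ⟨_, h⟩
  have hle2 : (T.neighborSet (Sum.inr (none : Option X))).ncard ≤ 2 := by
    have h := Set.ncard_le_ncard hsub (Set.toFinite _)
    rwa [Set.ncard_pair (by simp [hy])] at h
  have hge1 : 0 < (T.neighborSet (Sum.inr (none : Option X))).ncard :=
    (Set.ncard_pos (Set.toFinite _)).mpr hnonempty
  by_cases h1 : (T.neighborSet (Sum.inr (none : Option X))).ncard = 1
  · exact ⟨T, hTle, hTtree, hTdeg, h1⟩
  · have hnbhd : T.neighborSet (Sum.inr (none : Option X)) = {Sum.inl y₁, Sum.inl y₂} := by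
      refine Set.eq_of_subset_of_ncard_le hsub ?_ (Set.toFinite _)
      rw [Set.ncard_pair (by simp [hy])]
      omega
    have hxb2 : (bip (extInc I y₁ y₂)).Adj (Sum.inl y₂) (Sum.inr (some x)) := by
      rw [bip_adj_inl_inr, mem_extInc_some]
      exact hx2
    have hxb1 : (bip (extInc I y₁ y₂)).Adj (Sum.inl y₁) (Sum.inr (some x)) := by
      rw [bip_adj_inl_inr, mem_extInc_some]
      exact hx1
    by_cases hr : (T.deleteEdges {s(Sum.inr (none : Option X), Sum.inl y₂)}).Reachable
        (Sum.inr (some x)) (Sum.inl y₂)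
    · have hr' : ¬ (T.deleteEdges {s(Sum.inr (none : Option X), Sum.inl y₁)}).Reachable
          (Sum.inr (some x)) (Sum.inl y₁) :=
        cross_not_reachable T hTtree (Sum.inr (none : Option X)) (Sum.inl y₁) (Sum.inl y₂)
          (Sum.inr (some x)) (by simp [hy]) (by simp) (by simp) (by simp) hnbhd hr
      obtain ⟨T', hle', htree', hdeg', hdegn'⟩ :=
        swap_lemma (extInc I y₁ y₂) y₂ y₁ hy.symm x hxb1 T hTle hTtree
          (by rw [hnbhd, Set.pair_comm]) hr'
      exact ⟨T', hle', htree', fun y => (hdeg' y).trans (hTdeg y), hdegn'⟩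
    · obtain ⟨T', hle', htree', hdeg', hdegn'⟩ :=
        swap_lemma (extInc I y₁ y₂) y₁ y₂ hy x hxb2 T hTle hTtree hnbhd hr
      exact ⟨T', hle', htree', fun y => (hdeg' y).trans (hTdeg y), hdegn'⟩
end

section
/- Let H = (X, Y) be a hypergraph with vertex set X and hyperedge set Y whose associated bipartite graph is connected, fix two distinct hyperedges y₁, y₂ ∈ Y, suppose some vertex x ∈ X is incident to both y₁ and y₂, and let H' = (X ∪ {x*}, Y) be obtained from H by adjoining one new vertex x* incident to exactly y₁ and y₂. Then, in ℝ^Y, the convex hull of Q_{H'} is the Minkowski sum of the convex hull of Q_H and the line segment joining 1_{y₁} to 1_{y₂}: conv(Q_{H'}) = conv(Q_H) + [1_{y₁}, 1_{y₂}]. -/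
open SimpleGraph

open Pointwise

/-- The set of hypertrees, viewed in `ℝ^Y`. -/
def hypertreeSetR {X Y : Type*} (I : Y → Finset X) : Set (Y → ℝ) :=
  {h | ∃ f : Y → ℕ, IsHypertree I f ∧ h = fun y => (f y : ℝ)}

namespace ExtIncAux

open SimpleGraph Walk

section Generic

variable {V W : Type*}

lemma reachable_eq_of_isolated {G : SimpleGraph W} {a b : W}
    (h : ∀ w, ¬ G.Adj a w) (hr : G.Reachable a b) : a = b := by
  obtain ⟨p⟩ := hr
  cases p with
  | nil => rfl
  | cons h' _ => exact absurd h' (h _)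

lemma exists_adj_of_reachable_ne {G : SimpleGraph W} {a b : W}
    (hr : G.Reachable a b) (hne : a ≠ b) : ∃ w, G.Adj a w := by
  obtain ⟨p⟩ := hr
  cases p with
  | nil => exact absurd rfl hne
  | cons h' _ => exact ⟨_, h'⟩

lemma comap_reachable_of_avoid {G : SimpleGraph W} {f : V → W} {z : W}
    (hinj : Function.Injective f) (hsurj : ∀ w, w ≠ z → ∃ v, f v = w) :
    ∀ {a b : W} (p : G.Walk a b), z ∉ p.support →
      ∀ {u v : V}, f u = a → f v = b → (G.comap f).Reachable u v := by
  intro a b p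
  induction p with
  | nil =>
    intro _ u v hu hv
    cases hinj (hu.trans hv.symm)
    exact Reachable.refl _
  | @cons a c b h' q ih =>
    intro hz u v hu hv
    rw [support_cons, List.mem_cons] at hz
    push_neg at hz
    have hc : c ≠ z := fun h => hz.2 (h ▸ q.start_mem_support)
    obtain ⟨w, hw⟩ := hsurj c hc
    have hadj : (G.comap f).Adj u w := by
      show G.Adj (f u) (f w); rw [hu, hw]; exact h'
    exact hadj.reachable.trans (ih hz.2 hw hv)

lemma reach_to_adjacent' {G : SimpleGraph W} {f : V → W} {z : W}
    (hinj : Function.Injective f) (hsurj : ∀ w, w ≠ z → ∃ v, f v = w) :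
    ∀ {a b : W} (p : G.Walk a b), b = z → a ≠ z →
      ∀ {u : V}, f u = a →
      ∃ w : V, f w ∈ p.support ∧ G.Adj (f w) z ∧ (G.comap f).Reachable u w := by
  intro a b p
  induction p with
  | nil => intro hbz ha; exact absurd hbz ha
  | @cons a c b h' q ih =>
    intro hbz hne u hu
    by_cases hc : c = z
    · refine ⟨u, by simp [hu], ?_, Reachable.refl u⟩
      rw [hu, ← hc]; exact h'
    · obtain ⟨u', hu'⟩ := hsurj c hc
      obtain ⟨w, hmem, hadj, hreach⟩ := ih hbz hc hu'
      have hadj2 : (G.comap f).Adj u u' := by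
        show G.Adj (f u) (f u'); rw [hu, hu']; exact h'
      exact ⟨w, by simp [hmem], hadj, hadj2.reachable.trans hreach⟩

lemma reach_to_adjacent {G : SimpleGraph W} {f : V → W} {z : W}
    (hinj : Function.Injective f) (hsurj : ∀ w, w ≠ z → ∃ v, f v = w)
    {a : W} (p : G.Walk a z) (ha : a ≠ z)
    {u : V} (hu : f u = a) :
    ∃ w : V, f w ∈ p.support ∧ G.Adj (f w) z ∧ (G.comap f).Reachable u w :=
  reach_to_adjacent' hinj hsurj p rfl ha hu

lemma split_at_vertex [DecidableEq W] {G : SimpleGraph W} {f : V → W} {z : W}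
    (hinj : Function.Injective f) (hsurj : ∀ w, w ≠ z → ∃ v, f v = w)
    {a b : W} (p : G.Walk a b) (hp : p.IsPath) (hz : z ∈ p.support)
    (ha : a ≠ z) (hb : b ≠ z) {u v : V} (hu : f u = a) (hv : f v = b) :
    ∃ w₁ w₂ : V, G.Adj (f w₁) z ∧ G.Adj (f w₂) z ∧ f w₁ ≠ f w₂ ∧
      (G.comap f).Reachable u w₁ ∧ (G.comap f).Reachable v w₂ := by
  obtain ⟨w₁, hm₁, hadj₁, hr₁⟩ :=
    reach_to_adjacent hinj hsurj (p.takeUntil z hz) ha hu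
  obtain ⟨w₂, hm₂, hadj₂, hr₂⟩ :=
    reach_to_adjacent hinj hsurj (p.dropUntil z hz).reverse hb hv
  refine ⟨w₁, w₂, hadj₁, hadj₂, ?_, hr₁, hr₂⟩
  have hnodup : (p.support).Nodup := hp.support_nodup
  rw [← p.take_spec hz, support_append] at hnodup
  have hdisj := List.disjoint_of_nodup_append hnodup
  intro heq
  apply hdisj hm₁
  rw [heq]
  have hm₂' : f w₂ ∈ (p.dropUntil z hz).support := by
    rw [← List.mem_reverse, ← support_reverse]; exact hm₂
  rw [support_eq_cons (p.dropUntil z hz)] at hm₂'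
  rcases List.mem_cons.mp hm₂' with h | h
  · exact absurd h hadj₂.ne
  · exact h

lemma acyclic_comap {G : SimpleGraph W} (hG : G.IsAcyclic) {f : V → W}
    (hf : Function.Injective f) : (G.comap f).IsAcyclic := by
  intro v c hc
  exact hG (c.map ⟨f, fun h => h⟩) (hc.map hf)

/-- The canonical hom into a mapped graph. -/
def toMapHom {G : SimpleGraph V} (f : V ↪ W) : G →g G.map f where
  toFun := f
  map_rel' := fun h => ⟨f.injective.ne h.ne, _, _, h, rfl, rfl⟩

@[simp] lemma toMapHom_apply {G : SimpleGraph V} (f : V ↪ W) (v : V) :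
    toMapHom (G := G) f v = f v := rfl

lemma map_walk_pullback {G : SimpleGraph V} (f : V ↪ W) :
    ∀ {a b : W} (p : (G.map f).Walk a b) {a₀ b₀ : V}
      (ha : f a₀ = a) (hb : f b₀ = b),
      ∃ p₀ : G.Walk a₀ b₀,
        p = (p₀.map (toMapHom f)).copy ha hb := by
  intro a b p
  induction p with
  | nil =>
    intro a₀ b₀ ha hb
    cases f.injective (ha.trans hb.symm)
    subst ha
    exact ⟨Walk.nil, by simp⟩
  | @cons a c b h q ih =>
    intro a₀ b₀ ha hb
    obtain ⟨-, a', c', hadj, ha', hc'⟩ := h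
    subst ha
    subst hb
    subst hc'
    cases f.injective ha'
    obtain ⟨q₀, hq₀⟩ := ih rfl rfl
    refine ⟨Walk.cons hadj q₀, ?_⟩
    rw [hq₀]
    simp
    rfl

lemma acyclic_map {G : SimpleGraph V} (hG : G.IsAcyclic) (f : V ↪ W) :
    (G.map f).IsAcyclic := by
  intro v c hc
  obtain ⟨u₀, rfl⟩ : ∃ u₀, f u₀ = v := by
    cases c with
    | nil => exact absurd hc IsCycle.not_of_nil
    | cons h q =>
      obtain ⟨-, a, b, _, ha, _⟩ := h
      exact ⟨a, ha⟩
  obtain ⟨c₀, hc₀⟩ := map_walk_pullback f c rfl rfl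
  rw [hc₀] at hc
  replace hc : (c₀.map (toMapHom f)).IsCycle := hc
  rw [map_isCycle_iff_of_injective f.injective] at hc
  exact hG c₀ hc

end Generic

section Specific

variable {X Y : Type*} [DecidableEq X] [DecidableEq Y]

/-- The inclusion `Y ⊕ X → Y ⊕ Option X`. -/
def fe : Y ⊕ X → Y ⊕ Option X := Sum.map id some

@[simp] lemma fe_inl (y : Y) : (fe (Sum.inl y) : Y ⊕ Option X) = Sum.inl y := rfl

@[simp] lemma fe_inr (x : X) : (fe (Sum.inr x) : Y ⊕ Option X) = Sum.inr (some x) := rfl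

lemma fe_inj : Function.Injective (fe (X := X) (Y := Y)) := by
  rintro (a | a) (b | b) h <;> simp_all [fe]

lemma fe_ne_none (v : Y ⊕ X) : fe v ≠ Sum.inr none := by
  rcases v with a | a <;> simp [fe]

lemma fe_surj : ∀ w : Y ⊕ Option X, w ≠ Sum.inr none → ∃ v : Y ⊕ X, fe v = w := by
  rintro (y | (_ | x)) h
  · exact ⟨Sum.inl y, rfl⟩
  · exact absurd rfl h
  · exact ⟨Sum.inr x, rfl⟩

/-- The embedding `Y ⊕ X ↪ Y ⊕ Option X`. -/
def femb : (Y ⊕ X) ↪ (Y ⊕ Option X) := ⟨fe, fe_inj⟩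

@[simp] lemma femb_apply (v : Y ⊕ X) : (femb v : Y ⊕ Option X) = fe v := rfl

variable {I : Y → Finset X}

omit [DecidableEq X] [DecidableEq Y] in
lemma bip_adj_inl_inr {y : Y} {x : X} : (bip I).Adj (Sum.inl y) (Sum.inr x) ↔ x ∈ I y := by
  constructor
  · rintro ⟨hne, ⟨y', x', h1, h2, h3⟩ | ⟨y', x', h1, h2, h3⟩⟩
    · cases h1; cases h2; exact h3
    · exact absurd h1 (by simp)
  · intro h
    exact ⟨by simp, Or.inl ⟨y, x, rfl, rfl, h⟩⟩

omit [DecidableEq X] [DecidableEq Y] in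
lemma bip_adj_cases {a b : Y ⊕ X} (h : (bip I).Adj a b) :
    ∃ y x, x ∈ I y ∧ ((a = Sum.inl y ∧ b = Sum.inr x) ∨
      (a = Sum.inr x ∧ b = Sum.inl y)) := by
  rcases h with ⟨hne, ⟨y, x, h1, h2, h3⟩ | ⟨y, x, h1, h2, h3⟩⟩
  · exact ⟨y, x, h3, Or.inl ⟨h1, h2⟩⟩
  · exact ⟨y, x, h3, Or.inr ⟨h2, h1⟩⟩

variable {y₁ y₂ : Y}

lemma some_mem_extInc {x : X} {y : Y} :
    some x ∈ extInc I y₁ y₂ y ↔ x ∈ I y := by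
  simp only [extInc, Finset.mem_union]
  constructor
  · rintro (h | h)
    · simpa using h
    · split at h <;> simp_all
  · intro h; exact Or.inl (by simpa using h)

lemma none_mem_extInc {y : Y} :
    (none : Option X) ∈ extInc I y₁ y₂ y ↔ (y = y₁ ∨ y = y₂) := by
  simp only [extInc, Finset.mem_union]
  constructor
  · rintro (h | h)
    · simp at h
    · split at h
      · assumption
      · simp at h
  · intro h
    refine Or.inr ?_
    rw [if_pos h]
    simp

lemma extInc_comm : extInc I y₁ y₂ = extInc I y₂ y₁ := by
  funext y
  simp [extInc, or_comm]

lemma bip_ext_adj_some {y : Y} {x : X} :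
    (bip (extInc I y₁ y₂)).Adj (Sum.inl y) (Sum.inr (some x)) ↔ x ∈ I y := by
  rw [bip_adj_inl_inr, some_mem_extInc]

lemma bip_ext_adj_none {y : Y} :
    (bip (extInc I y₁ y₂)).Adj (Sum.inl y) (Sum.inr none) ↔ (y = y₁ ∨ y = y₂) := by
  rw [bip_adj_inl_inr, none_mem_extInc]

omit [DecidableEq X] [DecidableEq Y] in
/-- In any subgraph of `bip J`, the neighbours of `inl y` are all of the form `inr`. -/
lemma neighbor_inr {Z : Type*} {J : Y → Finset Z} {T : SimpleGraph (Y ⊕ Z)}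
    (hle : T ≤ bip J) {y : Y} {w : Y ⊕ Z} (h : T.Adj (Sum.inl y) w) :
    ∃ z, w = Sum.inr z ∧ z ∈ J y := by
  obtain ⟨y', z, hz, (⟨h1, h2⟩ | ⟨h1, h2⟩)⟩ := bip_adj_cases (hle h)
  · cases h1; exact ⟨z, h2, hz⟩
  · exact absurd h1 (by simp)

open scoped Classical in
/-- Decomposition of the `T'`-neighbourhood of `inl y` into old vertices and (possibly) `none`. -/
lemma nbhd_decomp {T' : SimpleGraph (Y ⊕ Option X)}
    (hle : T' ≤ bip (extInc I y₁ y₂)) (y : Y) :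
    T'.neighborSet (Sum.inl y) =
      fe '' ((T'.comap fe).neighborSet (Sum.inl y)) ∪
        (if T'.Adj (Sum.inl y) (Sum.inr none) then {Sum.inr none} else ∅) := by
  ext w
  simp only [Set.mem_union, Set.mem_image, mem_neighborSet, comap_adj]
  constructor
  · intro h
    obtain ⟨z, rfl, hz⟩ := neighbor_inr hle h
    rcases z with _ | x
    · right; rw [if_pos h]; exact rfl
    · exact Or.inl ⟨Sum.inr x, h, rfl⟩
  · rintro (⟨v, hv, rfl⟩ | h)
    · exact hv
    · split at h
      · cases h; assumption
      · cases h

open scoped Classical in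
lemma ncard_nbhd {T' : SimpleGraph (Y ⊕ Option X)} [Fintype X] [Fintype Y]
    (hle : T' ≤ bip (extInc I y₁ y₂)) (y : Y) :
    (T'.neighborSet (Sum.inl y)).ncard =
      ((T'.comap fe).neighborSet (Sum.inl y)).ncard +
        (if T'.Adj (Sum.inl y) (Sum.inr none) then 1 else 0) := by
  rw [nbhd_decomp hle y, Set.ncard_union_eq ?disj (Set.toFinite _) (Set.toFinite _),
    Set.ncard_image_of_injective _ fe_inj]
  · congr 1
    split <;> simp
  case disj =>
    split
    · rw [Set.disjoint_singleton_right]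
      rintro ⟨v, _, hv⟩
      exact fe_ne_none v hv
    · exact Set.disjoint_empty _

lemma forward [Fintype X] [Fintype Y] {f : Y → ℕ} (hf : IsHypertree I f)
    {c : Y} (hc : c = y₁ ∨ c = y₂) :
    IsHypertree (extInc I y₁ y₂) (fun y => f y + if y = c then 1 else 0) := by
  obtain ⟨T, hTle, hTree, hdeg⟩ := hf
  set e : Sym2 (Y ⊕ Option X) := s(Sum.inl c, Sum.inr none) with he
  set Tm : SimpleGraph (Y ⊕ Option X) := T.map femb with hTm
  set T' : SimpleGraph (Y ⊕ Option X) := Tm ⊔ fromEdgeSet {e} with hT'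
  have hnewadj : T'.Adj (Sum.inl c) (Sum.inr none) := by
    refine (sup_adj _ _ _ _).mpr (Or.inr ?_)
    rw [fromEdgeSet_adj]
    exact ⟨rfl, by simp⟩
  have hTmle : Tm ≤ bip (extInc I y₁ y₂) := by
    rintro a b ⟨-, u, v, huv, rfl, rfl⟩
    obtain ⟨y, x, hx, (⟨rfl, rfl⟩ | ⟨rfl, rfl⟩)⟩ := bip_adj_cases (hTle huv)
    · exact bip_ext_adj_some.mpr hx
    · exact (bip_ext_adj_some.mpr hx).symm
  have hT'le : T' ≤ bip (extInc I y₁ y₂) := by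
    rw [hT']
    refine sup_le hTmle ?_
    intro a b hab
    rw [fromEdgeSet_adj, Set.mem_singleton_iff] at hab
    rcases Sym2.eq_iff.mp hab.1 with ⟨rfl, rfl⟩ | ⟨rfl, rfl⟩
    · exact bip_ext_adj_none.mpr hc
    · exact (bip_ext_adj_none.mpr hc).symm
  have hiso : ∀ w, ¬ Tm.Adj (Sum.inr none) w := by
    rintro w ⟨-, u, v, huv, hu, rfl⟩
    exact fe_ne_none u hu
  have hT'del : T' \ fromEdgeSet {e} ≤ Tm := by
    intro a b hab
    rw [sdiff_adj] at hab
    obtain ⟨h1, h2⟩ := hab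
    rcases h1 with h | h
    · exact h
    · exact absurd h h2
  have hconn' : T'.Connected := by
    rw [connected_iff_exists_forall_reachable]
    refine ⟨Sum.inl c, ?_⟩
    have hbase : ∀ v : Y ⊕ X, T'.Reachable (Sum.inl c) (fe v) := fun v =>
      (hTree.isConnected.preconnected (Sum.inl c) v).map
        (⟨fe, fun h => (sup_adj _ _ _ _).mpr (Or.inl ⟨fe_inj.ne h.ne, _, _, h, rfl, rfl⟩)⟩ : T →g T')
    rintro (y | (_ | x))
    · exact hbase (Sum.inl y)
    · exact hnewadj.reachable
    · exact hbase (Sum.inr x)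
  have hacy' : T'.IsAcyclic := by
    intro v cw hcw
    by_cases hin : e ∈ cw.edges
    · have hnr : ¬ (T' \ fromEdgeSet {e}).Reachable (Sum.inl c) (Sum.inr none) := by
        intro hr
        have := reachable_eq_of_isolated hiso (Reachable.mono hT'del hr.symm)
        simp at this
      have hbridge : T'.IsBridge e := isBridge_iff.mpr hnr
      exact hbridge.notMem_edges_of_isCycle hcw hin
    · have hsub : ∀ e' ∈ cw.edges, e' ∈ Tm.edgeSet := by
        intro e' he'
        have hmem := cw.edges_subset_edgeSet he'
        rw [hT', edgeSet_sup] at hmem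
        rcases hmem with h | h
        · exact h
        · rw [edgeSet_fromEdgeSet, Set.mem_diff, Set.mem_singleton_iff] at h
          exact absurd (h.1 ▸ he') hin
      exact acyclic_map hTree.IsAcyclic femb _ (hcw.transfer hsub)
  have hcomap : T'.comap fe = T := by
    ext u v
    simp only [comap_adj, hT', sup_adj]
    constructor
    · rintro (⟨-, a, b, hab, ha, hb⟩ | h)
      · cases fe_inj (ha : fe a = fe u)
        cases fe_inj (hb : fe b = fe v)
        exact hab
      · rw [fromEdgeSet_adj, Set.mem_singleton_iff] at h
        rcases Sym2.eq_iff.mp h.1 with ⟨_, h2⟩ | ⟨h2, _⟩ <;>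
          exact absurd h2 (fe_ne_none _)
    · intro h
      exact Or.inl ⟨fe_inj.ne h.ne, u, v, h, rfl, rfl⟩
  have hadj_iff : ∀ y : Y, T'.Adj (Sum.inl y) (Sum.inr none) ↔ y = c := by
    intro y
    constructor
    · intro h
      rcases h with h | h
      · exact absurd h.symm (hiso _)
      · rw [fromEdgeSet_adj, Set.mem_singleton_iff] at h
        rcases Sym2.eq_iff.mp h.1 with ⟨h1, _⟩ | ⟨h2, _⟩
        · exact Sum.inl_injective h1
        · simp at h2
    · rintro rfl
      exact hnewadj
  refine ⟨T', hT'le, ⟨hconn', hacy'⟩, ?_⟩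
  intro y
  rw [ncard_nbhd hT'le y, hcomap, hdeg y]
  simp only [hadj_iff y]
  by_cases hyc : y = c <;> simp [hyc]

lemma fe_eq_inl {v : Y ⊕ X} {y : Y} (h : fe v = Sum.inl y) : v = Sum.inl y := by
  cases v <;> simp_all [fe]

lemma build_f [Fintype X] [Fintype Y] (hy : y₁ ≠ y₂) {T : SimpleGraph (Y ⊕ X)}
    (hle : T ≤ bip I) (hconn : T.Connected) (hacy : T.IsAcyclic) {f' : Y → ℕ} {c : Y}
    (hcount : ∀ y, f' y + 1 =
      (T.neighborSet (Sum.inl y)).ncard + (if y = c then 1 else 0)) :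
    ∃ f : Y → ℕ, IsHypertree I f ∧ ∀ y, f' y = f y + if y = c then 1 else 0 := by
  have hpos : ∀ y : Y, 0 < (T.neighborSet (Sum.inl y)).ncard := by
    intro y
    rw [Set.ncard_pos (Set.toFinite _)]
    have hother : ∃ w : Y ⊕ X, Sum.inl y ≠ w := by
      by_cases h : y = y₁
      · exact ⟨Sum.inl y₂, by simp [h, hy]⟩
      · exact ⟨Sum.inl y₁, by simp [h]⟩
    obtain ⟨w, hw⟩ := hother
    obtain ⟨w', hw'⟩ := exists_adj_of_reachable_ne (hconn.preconnected (Sum.inl y) w) hw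
    exact ⟨w', hw'⟩
  refine ⟨fun y => (T.neighborSet (Sum.inl y)).ncard - 1, ⟨T, hle, ⟨hconn, hacy⟩, ?_⟩, ?_⟩
  · intro y
    have := hpos y
    beta_reduce
    omega
  · intro y
    have h1 := hcount y
    have h2 := hpos y
    beta_reduce
    by_cases hyc : y = c
    · rw [if_pos hyc] at h1 ⊢
      omega
    · rw [if_neg hyc] at h1 ⊢
      omega

lemma backward_core [Fintype X] [Fintype Y] (hy : y₁ ≠ y₂)
    {x : X} (hx₁ : x ∈ I y₁) (hx₂ : x ∈ I y₂) {T' : SimpleGraph (Y ⊕ Option X)}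
    (hle : T' ≤ bip (extInc I y₁ y₂)) (hconn' : T'.Connected) (hacy : T'.IsAcyclic)
    (hreachx : (T'.comap fe).Reachable (Sum.inr x) (Sum.inl y₁))
    (hadj1 : T'.Adj (Sum.inl y₁) (Sum.inr none)) {f' : Y → ℕ}
    (hdeg' : ∀ y, (T'.neighborSet (Sum.inl y)).ncard = f' y + 1) :
    ∃ f : Y → ℕ, IsHypertree I f ∧ ∀ y, f' y = f y + if y = y₁ then 1 else 0 := by
  set Tc : SimpleGraph (Y ⊕ X) := T'.comap fe with hTc
  have hNone : ∀ w, T'.Adj (Sum.inr none) w → w = Sum.inl y₁ ∨ w = Sum.inl y₂ := by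
    intro w h
    obtain ⟨y, o, ho, (⟨h1, h2⟩ | ⟨h1, h2⟩)⟩ := bip_adj_cases (hle h)
    · simp at h1
    · have hono : o = none := by
        have := h1.symm
        injection this with h3
      subst hono
      rcases none_mem_extInc.mp ho with rfl | rfl
      · exact Or.inl h2
      · exact Or.inr h2
  have hTcle : Tc ≤ bip I := by
    intro u v h
    obtain ⟨y, o, ho, (⟨h1, h2⟩ | ⟨h1, h2⟩)⟩ := bip_adj_cases (hle h)
    · obtain rfl := fe_eq_inl h1
      rcases v with a | b
      · simp [fe] at h2
      · have : o = some b := by simpa [fe] using h2.symm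
        subst this
        exact bip_adj_inl_inr.mpr (some_mem_extInc.mp ho)
    · obtain rfl := fe_eq_inl h2
      rcases u with a | b
      · simp [fe] at h1
      · have : o = some b := by simpa [fe] using h1.symm
        subst this
        exact (bip_adj_inl_inr.mpr (some_mem_extInc.mp ho)).symm
  have hTca : Tc.IsAcyclic := acyclic_comap hacy fe_inj
  have hdel : ∀ (e0 : Sym2 (Y ⊕ Option X)), (Sum.inr none) ∈ e0 →
      ∀ {u v : Y ⊕ X}, Tc.Reachable u v →
        (T' \ fromEdgeSet {e0}).Reachable (fe u) (fe v) := by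
    intro e0 he0 u v hr
    refine hr.map (⟨fe, ?_⟩ : Tc →g (T' \ fromEdgeSet {e0}))
    intro a b hab
    rw [sdiff_adj]
    refine ⟨hab, ?_⟩
    rw [fromEdgeSet_adj]
    rintro ⟨h1, -⟩
    rw [Set.mem_singleton_iff] at h1
    have hmem : (Sum.inr none : Y ⊕ Option X) ∈ s(fe a, fe b) := h1 ▸ he0
    rcases Sym2.mem_iff.mp hmem with h | h
    · exact fe_ne_none a h.symm
    · exact fe_ne_none b h.symm
  by_cases hd : T'.Adj (Sum.inl y₂) (Sum.inr none)
  case neg =>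
    have hN1 : ∀ w, T'.Adj (Sum.inr none) w → w = Sum.inl y₁ := by
      intro w h
      rcases hNone w h with h1 | h1
      · exact h1
      · exact absurd (h1 ▸ h).symm hd
    have hconnTc : Tc.Connected := by
      rw [connected_iff]
      refine ⟨fun u v => ?_, ⟨Sum.inl y₁⟩⟩
      obtain ⟨p⟩ := hconn'.preconnected (fe u) (fe v)
      rcases Classical.em (Sum.inr none ∈ p.toPath.1.support) with hmem | hmem
      · obtain ⟨w₁, w₂, ha₁, ha₂, hne, -, -⟩ :=
          split_at_vertex fe_inj fe_surj p.toPath.1 p.toPath.2 hmem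
            (fe_ne_none u) (fe_ne_none v) rfl rfl
        exact absurd ((hN1 _ ha₁.symm).trans (hN1 _ ha₂.symm).symm) hne
      · exact comap_reachable_of_avoid fe_inj fe_surj p.toPath.1 hmem rfl rfl
    have hrel : ∀ y : Y, T'.Adj (Sum.inl y) (Sum.inr none) ↔ y = y₁ := by
      intro y
      constructor
      · intro h
        exact Sum.inl_injective (hN1 _ h.symm)
      · rintro rfl
        exact hadj1
    have hcount : ∀ y, f' y + 1 =
        (Tc.neighborSet (Sum.inl y)).ncard + (if y = y₁ then 1 else 0) := by
      intro y
      rw [← hdeg' y, ncard_nbhd hle y]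
      simp only [hrel y]
      convert rfl
    exact build_f hy hTcle hconnTc hTca hcount
  case pos =>
    have hrel : ∀ y : Y, T'.Adj (Sum.inl y) (Sum.inr none) ↔ (y = y₁ ∨ y = y₂) := by
      intro y
      constructor
      · intro h
        rcases hNone _ h.symm with h1 | h1
        · exact Or.inl (Sum.inl_injective h1)
        · exact Or.inr (Sum.inl_injective h1)
      · rintro (rfl | rfl)
        · exact hadj1
        · exact hd
    have hxadj : ¬ Tc.Adj (Sum.inl y₂) (Sum.inr x) := by
      intro hadjx
      have hbridge : T'.IsBridge s(Sum.inl y₁, Sum.inr none) :=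
        (isAcyclic_iff_forall_adj_isBridge.mp hacy) hadj1
      rw [isBridge_iff] at hbridge
      refine hbridge ?_
      have r1 := hdel s(Sum.inl y₁, Sum.inr none) (by simp) hreachx.symm
      have r2 := hdel s(Sum.inl y₁, Sum.inr none) (by simp) hadjx.symm.reachable
      have r3 : (T' \ fromEdgeSet {s(Sum.inl y₁, Sum.inr none)}).Adj
          (Sum.inl y₂) (Sum.inr none) := by
        rw [sdiff_adj]
        refine ⟨hd, ?_⟩
        rw [fromEdgeSet_adj]
        rintro ⟨h1, -⟩
        rw [Set.mem_singleton_iff] at h1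
        rcases Sym2.eq_iff.mp h1 with ⟨h2, -⟩ | ⟨h2, -⟩
        · exact hy (Sum.inl_injective h2).symm
        · simp at h2
      exact (r1.trans r2).trans r3.reachable
    set enew : Sym2 (Y ⊕ X) := s(Sum.inl y₂, Sum.inr x) with henew
    set TT : SimpleGraph (Y ⊕ X) := Tc ⊔ fromEdgeSet {enew} with hTT
    have hadjTT : TT.Adj (Sum.inl y₂) (Sum.inr x) := by
      refine (sup_adj _ _ _ _).mpr (Or.inr ?_)
      rw [fromEdgeSet_adj]
      exact ⟨rfl, by simp⟩
    have hTTle : TT ≤ bip I := by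
      refine sup_le hTcle ?_
      intro a b hab
      rw [fromEdgeSet_adj, Set.mem_singleton_iff] at hab
      rcases Sym2.eq_iff.mp hab.1 with ⟨rfl, rfl⟩ | ⟨rfl, rfl⟩
      · exact bip_adj_inl_inr.mpr hx₂
      · exact (bip_adj_inl_inr.mpr hx₂).symm
    have hkey : TT.Reachable (Sum.inl y₁) (Sum.inl y₂) :=
      ((hreachx.mono le_sup_left).symm.trans hadjTT.reachable.symm)
    have hw : ∀ w : Y ⊕ X, (fe w = Sum.inl y₁ ∨ fe w = Sum.inl y₂) →
        TT.Reachable w (Sum.inl y₁) := by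
      rintro w (h | h) <;> obtain rfl := fe_eq_inl h
      · exact Reachable.refl _
      · exact hkey.symm
    have hconnTT : TT.Connected := by
      rw [connected_iff]
      refine ⟨fun u v => ?_, ⟨Sum.inl y₁⟩⟩
      obtain ⟨p⟩ := hconn'.preconnected (fe u) (fe v)
      rcases Classical.em (Sum.inr none ∈ p.toPath.1.support) with hmem | hmem
      · obtain ⟨w₁, w₂, ha₁, ha₂, hne, hr₁, hr₂⟩ :=
          split_at_vertex fe_inj fe_surj p.toPath.1 p.toPath.2 hmem
            (fe_ne_none u) (fe_ne_none v) rfl rfl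
        have k₁ := hNone _ ha₁.symm
        have k₂ := hNone _ ha₂.symm
        exact ((hr₁.mono le_sup_left).trans (hw _ k₁)).trans
          ((hr₂.mono le_sup_left).trans (hw _ k₂)).symm
      · exact Reachable.mono le_sup_left
          (comap_reachable_of_avoid fe_inj fe_surj p.toPath.1 hmem rfl rfl)
    have hacyTT : TT.IsAcyclic := by
      intro v cw hcw
      by_cases hin : enew ∈ cw.edges
      · have hnb : ¬ TT.IsBridge enew := by
          intro hb
          exact hb.notMem_edges_of_isCycle hcw hin
        rw [henew, isBridge_iff] at hnb
        push_neg at hnb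
        have hreach2 := hnb
        have hsubTc : TT \ fromEdgeSet {enew} ≤ Tc := by
          intro a b hab
          rw [sdiff_adj] at hab
          obtain ⟨h1, h2⟩ := hab
          rcases (sup_adj _ _ _ _).mp h1 with h | h
          · exact h
          · exact absurd h h2
        have hreach3 : Tc.Reachable (Sum.inl y₂) (Sum.inr x) := hreach2.mono hsubTc
        have hbridge : T'.IsBridge s(Sum.inl y₂, Sum.inr none) :=
          (isAcyclic_iff_forall_adj_isBridge.mp hacy) hd
        rw [isBridge_iff] at hbridge
        apply hbridge
        have rA := hdel s(Sum.inl y₂, Sum.inr none) (by simp) hreach3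
        have rB := hdel s(Sum.inl y₂, Sum.inr none) (by simp) hreachx
        have rC : (T' \ fromEdgeSet {s(Sum.inl y₂, Sum.inr none)}).Adj
            (Sum.inl y₁) (Sum.inr none) := by
          rw [sdiff_adj]
          refine ⟨hadj1, ?_⟩
          rw [fromEdgeSet_adj]
          rintro ⟨h1, -⟩
          rw [Set.mem_singleton_iff] at h1
          rcases Sym2.eq_iff.mp h1 with ⟨h2, -⟩ | ⟨h2, -⟩
          · exact hy (Sum.inl_injective h2)
          · simp at h2
        exact (rA.trans rB).trans rC.reachable
      · have hsub : ∀ e' ∈ cw.edges, e' ∈ Tc.edgeSet := by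
          intro e' he'
          have hmem := cw.edges_subset_edgeSet he'
          rw [hTT, edgeSet_sup] at hmem
          rcases hmem with h | h
          · exact h
          · rw [edgeSet_fromEdgeSet, Set.mem_diff, Set.mem_singleton_iff] at h
            exact absurd (h.1 ▸ he') hin
        exact hTca _ (hcw.transfer hsub)
    have hTnb : ∀ y, (TT.neighborSet (Sum.inl y)).ncard =
        (Tc.neighborSet (Sum.inl y)).ncard + (if y = y₂ then 1 else 0) := by
      intro y
      have hset : TT.neighborSet (Sum.inl y) =
          Tc.neighborSet (Sum.inl y) ∪ (if y = y₂ then {Sum.inr x} else ∅) := by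
        ext w
        simp only [mem_neighborSet, Set.mem_union]
        constructor
        · intro h
          rcases (sup_adj _ _ _ _).mp h with h | h
          · exact Or.inl h
          · rw [fromEdgeSet_adj, Set.mem_singleton_iff] at h
            rcases Sym2.eq_iff.mp h.1 with ⟨h1, rfl⟩ | ⟨h1, -⟩
            · obtain rfl := Sum.inl_injective h1
              rw [if_pos rfl]
              exact Or.inr rfl
            · simp at h1
        · rintro (h | h)
          · exact (sup_adj _ _ _ _).mpr (Or.inl h)
          · by_cases hyy : y = y₂
            · rw [if_pos hyy] at h
              cases h
              subst hyy
              exact hadjTT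
            · rw [if_neg hyy] at h
              cases h
      rw [hset]
      by_cases hyy : y = y₂
      · rw [if_pos hyy, if_pos hyy,
          Set.ncard_union_eq ?_ (Set.toFinite _) (Set.toFinite _), Set.ncard_singleton]
        rw [Set.disjoint_singleton_right]
        subst hyy
        exact hxadj
      · rw [if_neg hyy, if_neg hyy]
        simp
    have hcount : ∀ y, f' y + 1 =
        (TT.neighborSet (Sum.inl y)).ncard + (if y = y₁ then 1 else 0) := by
      intro y
      rw [← hdeg' y, ncard_nbhd hle y, hTnb y]
      simp only [hrel y]
      by_cases h1 : y = y₁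
      · subst h1
        simp [hy]
        rfl
      · by_cases h2 : y = y₂ <;> simp [h1, h2, Ne.symm hy] <;> rfl
    exact build_f hy hTTle hconnTT hacyTT hcount

lemma backward [Fintype X] [Fintype Y] (hy : y₁ ≠ y₂)
    (hx : ∃ x, x ∈ I y₁ ∧ x ∈ I y₂) {f' : Y → ℕ}
    (hf' : IsHypertree (extInc I y₁ y₂) f') :
    ∃ (f : Y → ℕ) (c : Y), (c = y₁ ∨ c = y₂) ∧ IsHypertree I f ∧
      ∀ y, f' y = f y + if y = c then 1 else 0 := by
  obtain ⟨x, hx₁, hx₂⟩ := hx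
  obtain ⟨T', hle, hTree, hdeg'⟩ := hf'
  have hconn' := hTree.isConnected
  have hacy := hTree.IsAcyclic
  obtain ⟨p⟩ := hconn'.preconnected (Sum.inr (some x)) (Sum.inr none)
  obtain ⟨w₀, -, hadj₀, hreach₀⟩ := reach_to_adjacent fe_inj fe_surj p
      (by simp) (u := Sum.inr x) rfl
  have hN : fe w₀ = Sum.inl y₁ ∨ fe w₀ = Sum.inl y₂ := by
    obtain ⟨y, o, ho, (⟨h1, h2⟩ | ⟨h1, h2⟩)⟩ := bip_adj_cases (hle hadj₀)
    · have hono : o = none := by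
        injection h2 with h3
        exact h3.symm
      subst hono
      rcases none_mem_extInc.mp ho with rfl | rfl
      · exact Or.inl h1
      · exact Or.inr h1
    · simp at h2
  rcases hN with hN | hN
  · obtain rfl := fe_eq_inl hN
    obtain ⟨f, hf, heq⟩ := backward_core hy hx₁ hx₂ hle hconn' hacy hreach₀ hadj₀ hdeg'
    exact ⟨f, y₁, Or.inl rfl, hf, heq⟩
  · obtain rfl := fe_eq_inl hN
    have hle' : T' ≤ bip (extInc I y₂ y₁) := by rwa [← extInc_comm]
    obtain ⟨f, hf, heq⟩ :=
      backward_core hy.symm hx₂ hx₁ hle' hconn' hacy hreach₀ hadj₀ hdeg'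
    exact ⟨f, y₂, Or.inr rfl, hf, heq⟩

lemma cast_split (f : Y → ℕ) (c : Y) :
    (fun y => ((f y + if y = c then 1 else 0 : ℕ) : ℝ)) =
      (fun y => (f y : ℝ)) + (fun y => if y = c then (1 : ℝ) else 0) := by
  funext y
  simp only [Pi.add_apply]
  by_cases h : y = c <;> simp [h]

end Specific

end ExtIncAux

open ExtIncAux in
/-- If some vertex `x ∈ X` is incident to both `y₁` and `y₂`, then in
`ℝ^Y` the convex hull of `Q_{H'}` is the Minkowski sum of the convex hull of
`Q_H` and the segment joining `1_{y₁}` to `1_{y₂}`. -/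
theorem extInc_convexHull {X Y : Type*} [Fintype X] [Fintype Y]
    [DecidableEq X] [DecidableEq Y] (I : Y → Finset X)
    (hne : ∀ y, (I y).Nonempty) (hconn : (bip I).Connected)
    (y₁ y₂ : Y) (hy : y₁ ≠ y₂) (hx : ∃ x, x ∈ I y₁ ∧ x ∈ I y₂) :
    convexHull ℝ (hypertreeSetR (extInc I y₁ y₂)) =
      convexHull ℝ (hypertreeSetR I) +
        segment ℝ (fun y => if y = y₁ then (1 : ℝ) else 0)
          (fun y => if y = y₂ then (1 : ℝ) else 0) := by
  have hsetEq : hypertreeSetR (extInc I y₁ y₂) =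
      hypertreeSetR I + ({(fun y => if y = y₁ then (1 : ℝ) else 0),
        (fun y => if y = y₂ then (1 : ℝ) else 0)} : Set (Y → ℝ)) := by
    ext h
    constructor
    · rintro ⟨f', hf', rfl⟩
      obtain ⟨f, c, hc, hf, heq⟩ := backward hy hx hf'
      rw [Set.mem_add]
      refine ⟨(fun y => (f y : ℝ)), ⟨f, hf, rfl⟩,
        (fun y => if y = c then (1 : ℝ) else 0), ?_, ?_⟩
      · rcases hc with rfl | rfl
        · exact Set.mem_insert _ _
        · exact Set.mem_insert_of_mem _ rfl
      · have h2 : f' = fun y => f y + if y = c then 1 else 0 := funext heq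
        rw [h2]
        exact (cast_split f c).symm
    · intro hmem
      rw [Set.mem_add] at hmem
      obtain ⟨a, ⟨f, hf, rfl⟩, b, hb, rfl⟩ := hmem
      rcases Set.mem_insert_iff.mp hb with rfl | hb
      · exact ⟨fun y => f y + if y = y₁ then 1 else 0, forward hf (Or.inl rfl),
          (cast_split f y₁).symm⟩
      · obtain rfl := Set.mem_singleton_iff.mp hb
        exact ⟨fun y => f y + if y = y₂ then 1 else 0, forward hf (Or.inr rfl),
          (cast_split f y₂).symm⟩
  rw [hsetEq, convexHull_add, convexHull_pair]
end
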